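/- Let Δ be a k-dimensional simplicial complex on [s] with Stanley-Reisner ideal I_Δ. Suppose α ∈ ℤ^s satisfies G_α ∈ Δ and the reduced simplicial homology H̃_{k−|G_α|}(Δ_α(I_Δ^{(n)}); K) ≠ 0. Then α_i ≤ n − 1 for every i ∈ [s]. -/

import Mathlib

open MvPolynomial

variable (K : Type) [Field K] {N : ℕ}

/-- The "negative support" `G_α = {i : α i < 0}` of an exponent vector `α ∈ ℤ^N`. -/
def negSupp (α : Fin N → ℤ) : Finset (Fin N) :=
  Finset.univ.filter (fun i => α i < 0)

/-- The multiplicative set generated by the variables `x_i`, `i ∈ W`. -/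
noncomputable def varMonoid (W : Finset (Fin N)) : Submonoid (MvPolynomial (Fin N) K) :=
  Submonoid.closure ((fun i => (X i : MvPolynomial (Fin N) K)) '' ↑W)

/-- The Laurent monomial `x^α` in the localization `S[x_i^{-1} : i ∈ W]`,
for `α ∈ ℤ^N` whose negative support is contained in `W`. -/
noncomputable def xPow (α : Fin N → ℤ) (W : Finset (Fin N)) (h : negSupp α ⊆ W) :
    Localization (varMonoid K W) :=
  algebraMap (MvPolynomial (Fin N) K) _ (∏ i, X i ^ (α i).toNat) *
    IsLocalization.mk' (Localization (varMonoid K W)) (1 : MvPolynomial (Fin N) K)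
      (⟨∏ i ∈ negSupp α, X i ^ (-(α i)).toNat,
        Submonoid.prod_mem _ (fun i hi =>
          pow_mem (Submonoid.subset_closure
            (Set.mem_image_of_mem _ (Finset.mem_coe.mpr (h hi)))) _)⟩ : varMonoid K W)

/-- The degree complex `Δ_α(I)` of a monomial ideal `I`:
`F ∈ Δ_α(I)` iff `F ⊆ [N] ∖ G_α` and `x^α ∉ I·S[x_i^{-1} : i ∈ F ∪ G_α]`. -/
def degreeComplex (I : Ideal (MvPolynomial (Fin N) K)) (α : Fin N → ℤ) :
    Set (Finset (Fin N)) :=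
  {F | Disjoint F (negSupp α) ∧
    xPow K α (F ∪ negSupp α) (Finset.subset_union_right) ∉
      Ideal.map (algebraMap (MvPolynomial (Fin N) K)
        (Localization (varMonoid K (F ∪ negSupp α)))) I}

/-- The module of simplicial `K`-chains of `Δ` spanned by the faces of cardinality `m`. -/
abbrev chainModule (Δ : Set (Finset (Fin N))) (m : ℕ) : Type :=
  {F : Finset (Fin N) // F ∈ Δ ∧ F.card = m} →₀ K

open Classical in
/-- The simplicial boundary map from `m`-cardinality+1 chains to `m`-cardinality chains,
sending a face `F` to `∑_{i ∈ F} (-1)^{|{j ∈ F : j < i}|} (F ∖ {i})`. -/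
noncomputable def bdry (Δ : Set (Finset (Fin N))) (m : ℕ) :
    chainModule K Δ (m + 1) →ₗ[K] chainModule K Δ m :=
  Finsupp.lsum K (fun F =>
    ∑ i ∈ F.1.attach,
      ((-1 : K) ^ (F.1.filter (fun j => j < i.1)).card) •
        (if h : (F.1.erase i.1) ∈ Δ then
          Finsupp.lsingle (⟨F.1.erase i.1, h, by
            simp [Finset.card_erase_of_mem i.2, F.2.2]⟩ :
              {G : Finset (Fin N) // G ∈ Δ ∧ G.card = m})
        else 0))

/-- The full boundary map `∂_m : C_m → C_{m-1}`, with `∂_0 = 0`. -/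
noncomputable def bdryFrom (Δ : Set (Finset (Fin N))) :
    (m : ℕ) → (chainModule K Δ m →ₗ[K] chainModule K Δ (m - 1))
  | 0 => 0
  | (n + 1) => bdry K Δ n

/-- The reduced simplicial homology `H̃_{m-1}(Δ; K) = ker ∂_m / im ∂_{m+1}`,
indexed by the cardinality level `m` (so dimension `m - 1`). -/
noncomputable def homologyAtLevel (Δ : Set (Finset (Fin N))) (m : ℕ) : Type :=
  letI : HasQuotient (LinearMap.ker (bdryFrom K Δ m))
      (Submodule K (LinearMap.ker (bdryFrom K Δ m))) :=
      Submodule.hasQuotient (R := K) (M := LinearMap.ker (bdryFrom K Δ m))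
  LinearMap.ker (bdryFrom K Δ m) ⧸
    Submodule.comap (LinearMap.ker (bdryFrom K Δ m)).subtype
      (LinearMap.range (bdry K Δ m))

/-- `H̃_d(Δ; K) ≠ 0`, for an arbitrary integer dimension `d`
(nonzero is only possible when `d ≥ -1`). -/
def reducedHomologyNonzero (Δ : Set (Finset (Fin N))) (d : ℤ) : Prop :=
  ∃ m : ℕ, (m : ℤ) = d + 1 ∧ Nontrivial (homologyAtLevel K Δ m)

/-- The Stanley–Reisner ideal of `Δ`, generated by the squarefree monomials
`x_F = ∏_{i ∈ F} x_i` over the non-faces `F` of `Δ`. -/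
noncomputable def stanleyReisner (Δ : Set (Finset (Fin N))) : Ideal (MvPolynomial (Fin N) K) :=
  Ideal.span {f | ∃ F : Finset (Fin N), F ∉ Δ ∧ f = ∏ i ∈ F, X i}

/-- The monomial prime `P_F = (x_i : i ∉ F)`. -/
noncomputable def facePrime (F : Finset (Fin N)) : Ideal (MvPolynomial (Fin N) K) :=
  Ideal.span {f | ∃ i : Fin N, i ∉ F ∧ f = X i}

/-- The set of facets (maximal faces) of `Δ`. -/
def facets (Δ : Set (Finset (Fin N))) : Set (Finset (Fin N)) :=
  {F | F ∈ Δ ∧ ∀ G ∈ Δ, F ⊆ G → F = G}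

/-- `Δ` is a simplicial complex: closed under taking subsets. -/
def DownClosed (Δ : Set (Finset (Fin N))) : Prop :=
  ∀ F ∈ Δ, ∀ G : Finset (Fin N), G ⊆ F → G ∈ Δ

/-- The `n`-th symbolic power `I_Δ^{(n)} = ⋂_{F facet of Δ} P_F^n`
of the Stanley–Reisner ideal of `Δ`. -/
noncomputable def symbolicPowerSR (Δ : Set (Finset (Fin N))) (n : ℕ) : Ideal (MvPolynomial (Fin N) K) :=
  ⨅ F ∈ facets Δ, (facePrime K F) ^ n

/-- The simplicial complex `Δ(I) = {F : x_F ∉ √I}` attached to a monomial ideal `I`. -/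
def complexOfIdeal (I : Ideal (MvPolynomial (Fin N) K)) : Set (Finset (Fin N)) :=
  {F | (∏ i ∈ F, X i) ∉ I.radical}

/-- The set of degrees `t` in which the `i`-th graded local cohomology module
`H^i_m(S/I)_t` of a monomial quotient is nonzero; by Takayama's formula this is
expressed through the degree complexes: `H^i_m(S/I)_α ≠ 0` iff `G_α ∈ Δ(I)` and
`H̃_{i - |G_α| - 1}(Δ_α(I); K) ≠ 0`. -/
def localCohNonzeroDegrees (i : ℕ) (I : Ideal (MvPolynomial (Fin N) K)) : Set ℤ :=
  {t | ∃ α : Fin N → ℤ, (∑ j, α j) = t ∧ negSupp α ∈ complexOfIdeal K I ∧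
    reducedHomologyNonzero K (degreeComplex K I α) ((i : ℤ) - (negSupp α).card - 1)}

/-- The `a_i`-invariant `a_i(S/I) = max {t : H^i_m(S/I)_t ≠ 0}` of a monomial quotient,
via Takayama's formula. -/
noncomputable def aInvariant (i : ℕ) (I : Ideal (MvPolynomial (Fin N) K)) : ℤ :=
  sSup (localCohNonzeroDegrees K i I)

/-- The link of a face `G` in `Δ`. -/
def link (Δ : Set (Finset (Fin N))) (G : Finset (Fin N)) : Set (Finset (Fin N)) :=
  {F | Disjoint F G ∧ F ∪ G ∈ Δ}

/-- The pure `k`-skeleton of `Γ`: the subcomplex generated by the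
`k`-dimensional (i.e. `(k+1)`-element) faces of `Γ`. -/
def pureSkeleton (Γ : Set (Finset (Fin N))) (k : ℕ) : Set (Finset (Fin N)) :=
  {F | ∃ G ∈ Γ, G.card = k + 1 ∧ F ⊆ G}

lemma monomial_mem_facePrime_pow (G : Finset (Fin N)) :
    ∀ (n : ℕ) (γ : Fin N → ℕ), n ≤ ∑ j ∈ Gᶜ, γ j →
      (∏ j, (X j : MvPolynomial (Fin N) K) ^ γ j) ∈ facePrime K G ^ n := by
  intro n
  induction n with
  | zero => intro γ _; simpa using Submodule.mem_top
  | succ n ih =>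
    intro γ hγ
    obtain ⟨j₀, hj₀G, hj₀⟩ : ∃ j₀ ∈ Gᶜ, 0 < γ j₀ := by
      by_contra h
      push_neg at h
      have hz : ∑ j ∈ Gᶜ, γ j = 0 :=
        Finset.sum_eq_zero fun j hj => Nat.le_zero.mp (h j hj)
      omega
    set γ' : Fin N → ℕ := Function.update γ j₀ (γ j₀ - 1) with hγ'def
    have hj₀' : γ' j₀ = γ j₀ - 1 := Function.update_self _ _ _
    have hagree : ∀ j, j ≠ j₀ → γ' j = γ j := fun j hj => Function.update_of_ne hj _ _
    have hsplit : ∀ j ∈ Gᶜ, γ j = γ' j + if j = j₀ then 1 else 0 := by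
      intro j _
      by_cases hj : j = j₀
      · subst hj; rw [hj₀', if_pos rfl]; omega
      · rw [hagree j hj, if_neg hj]; omega
    have hsum' : n ≤ ∑ j ∈ Gᶜ, γ' j := by
      have key : ∑ j ∈ Gᶜ, γ j = ∑ j ∈ Gᶜ, γ' j + 1 := by
        rw [Finset.sum_congr rfl hsplit, Finset.sum_add_distrib,
          Finset.sum_ite_eq' Gᶜ j₀ (fun _ => 1), if_pos hj₀G]
      omega
    have hprodeq : (∏ j ∈ Finset.univ.erase j₀, (X j : MvPolynomial (Fin N) K) ^ γ' j)
        = ∏ j ∈ Finset.univ.erase j₀, (X j : MvPolynomial (Fin N) K) ^ γ j :=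
      Finset.prod_congr rfl fun j hj => by rw [hagree j (Finset.ne_of_mem_erase hj)]
    have key : (∏ j, (X j : MvPolynomial (Fin N) K) ^ γ j)
        = (∏ j, (X j : MvPolynomial (Fin N) K) ^ γ' j) * X j₀ := by
      rw [← Finset.prod_erase_mul _ _ (Finset.mem_univ j₀),
        ← Finset.prod_erase_mul _ (fun j => (X j : MvPolynomial (Fin N) K) ^ γ' j)
          (Finset.mem_univ j₀), hprodeq, mul_assoc, hj₀', ← pow_succ]
      congr 2
      omega
    rw [key, pow_succ]
    exact Ideal.mul_mem_mul (ih γ' hsum')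
      (Ideal.subset_span ⟨j₀, Finset.mem_compl.mp hj₀G, rfl⟩)

lemma exists_facet_of_mem_degreeComplex (Δ : Set (Finset (Fin N))) (n : ℕ)
    (α : Fin N → ℤ) (F : Finset (Fin N))
    (hF : F ∈ degreeComplex K (symbolicPowerSR K Δ n) α) :
    ∃ G ∈ facets Δ, F ∪ negSupp α ⊆ G ∧ ∑ j ∈ Gᶜ, (α j).toNat < n := by
  by_contra hcon
  push_neg at hcon
  set W : Finset (Fin N) := F ∪ negSupp α with hWdef
  set f : MvPolynomial (Fin N) K := (∏ j ∈ W, X j) ^ n * ∏ j, X j ^ (α j).toNat with hfdef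
  have hfI : f ∈ symbolicPowerSR K Δ n := by
    rw [symbolicPowerSR]
    simp only [Ideal.mem_iInf]
    intro G hGfacet
    by_cases hWG : W ⊆ G
    · exact Ideal.mul_mem_left _ _
        (monomial_mem_facePrime_pow K G n _ (hcon G hGfacet hWG))
    · obtain ⟨j₀, hj₀W, hj₀G⟩ := Finset.not_subset.mp hWG
      refine Ideal.mul_mem_right _ _ (Ideal.pow_mem_pow ?_ n)
      rw [← Finset.prod_erase_mul _ _ hj₀W]
      exact Ideal.mul_mem_left _ _ (Ideal.subset_span ⟨j₀, hj₀G, rfl⟩)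
  apply hF.2
  have hu : (∏ j ∈ W, X j) ^ n ∈ varMonoid K W :=
    pow_mem (Submonoid.prod_mem _ fun j hj => Submonoid.subset_closure
      (Set.mem_image_of_mem _ (Finset.mem_coe.mpr hj))) n
  set u : varMonoid K W := ⟨(∏ j ∈ W, X j) ^ n, hu⟩ with hudef
  set s₀ : varMonoid K W :=
    (⟨∏ i ∈ negSupp α, X i ^ (-(α i)).toNat,
      Submonoid.prod_mem _ (fun i hi =>
        pow_mem (Submonoid.subset_closure
          (Set.mem_image_of_mem _ (Finset.mem_coe.mpr (Finset.subset_union_right hi)))) _)⟩ :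
      varMonoid K W) with hs₀def
  have hxPow : xPow K α W Finset.subset_union_right
      = algebraMap (MvPolynomial (Fin N) K) (Localization (varMonoid K W)) f *
        IsLocalization.mk' (Localization (varMonoid K W))
          (1 : MvPolynomial (Fin N) K) (u * s₀) := by
    rw [xPow, hfdef, map_mul]
    rw [show (1 : MvPolynomial (Fin N) K) = 1 * 1 by rw [one_mul],
      IsLocalization.mk'_mul]
    rw [show algebraMap (MvPolynomial (Fin N) K) (Localization (varMonoid K W))
          ((∏ j ∈ W, X j) ^ n) *
        algebraMap (MvPolynomial (Fin N) K) (Localization (varMonoid K W))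
          (∏ j, X j ^ (α j).toNat) *
        (IsLocalization.mk' (Localization (varMonoid K W)) (1 : MvPolynomial (Fin N) K) u *
         IsLocalization.mk' (Localization (varMonoid K W)) (1 : MvPolynomial (Fin N) K) s₀)
      = (IsLocalization.mk' (Localization (varMonoid K W)) (1 : MvPolynomial (Fin N) K) u *
          algebraMap (MvPolynomial (Fin N) K) (Localization (varMonoid K W)) ↑u) *
        (algebraMap (MvPolynomial (Fin N) K) (Localization (varMonoid K W))
          (∏ j, X j ^ (α j).toNat) *
         IsLocalization.mk' (Localization (varMonoid K W)) (1 : MvPolynomial (Fin N) K) s₀)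
      by rw [hudef]; ring]
    rw [IsLocalization.mk'_spec, map_one, one_mul]
    rw [one_mul]
  rw [hxPow]
  exact Ideal.mul_mem_right _ _ (Ideal.mem_map_of_mem _ hfI)

lemma degreeComplex_downClosed (I : Ideal (MvPolynomial (Fin N) K)) (α : Fin N → ℤ) :
    DownClosed (degreeComplex K I α) := by
  intro F hF F' hF'
  refine ⟨hF.1.mono_left hF', ?_⟩
  intro hmem
  apply hF.2
  have hsub : varMonoid K (F' ∪ negSupp α) ≤ varMonoid K (F ∪ negSupp α) :=
    Submonoid.closure_mono (Set.image_mono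
      (Finset.coe_subset.mpr (Finset.union_subset_union_left hF')))
  have hle : varMonoid K (F' ∪ negSupp α) ≤
      Submonoid.comap (RingHom.id (MvPolynomial (Fin N) K)) (varMonoid K (F ∪ negSupp α)) :=
    fun x hx => hsub hx
  set φ : Localization (varMonoid K (F' ∪ negSupp α)) →+*
      Localization (varMonoid K (F ∪ negSupp α)) :=
    IsLocalization.map (Localization (varMonoid K (F ∪ negSupp α)))
      (RingHom.id (MvPolynomial (Fin N) K)) hle with hφdef
  have hφx : φ (xPow K α (F' ∪ negSupp α) Finset.subset_union_right)
      = xPow K α (F ∪ negSupp α) Finset.subset_union_right := by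
    rw [xPow, xPow, map_mul, hφdef]
    rw [IsLocalization.map_eq, IsLocalization.map_mk']
    rfl
  have hcomp : φ.comp (algebraMap (MvPolynomial (Fin N) K)
        (Localization (varMonoid K (F' ∪ negSupp α))))
      = algebraMap (MvPolynomial (Fin N) K) (Localization (varMonoid K (F ∪ negSupp α))) := by
    rw [hφdef, IsLocalization.map_comp]
    rfl
  have := Ideal.mem_map_of_mem φ hmem
  rw [Ideal.map_map, hcomp] at this
  rwa [hφx] at this

lemma face_card_le_top_mem (Δ : Set (Finset (Fin N))) (k : ℕ)
    (hdim : ∀ G ∈ Δ, G.card ≤ k + 1) (n : ℕ) (α : Fin N → ℤ) (i : Fin N)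
    (hni : (n : ℤ) ≤ α i) (m : ℕ) (hmk : m + (negSupp α).card = k + 1)
    (F : Finset (Fin N)) (hFΓ : F ∈ degreeComplex K (symbolicPowerSR K Δ n) α) :
    F.card ≤ m ∧ (F.card = m → i ∈ F) := by
  obtain ⟨G, hGfacet, hsub, hlt⟩ := exists_facet_of_mem_degreeComplex K Δ n α F hFΓ
  have hGΔ : G ∈ Δ := hGfacet.1
  have hcardG : G.card ≤ k + 1 := hdim _ hGΔ
  have hdisj : Disjoint F (negSupp α) := hFΓ.1
  have hcardW : (F ∪ negSupp α).card = F.card + (negSupp α).card :=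
    Finset.card_union_of_disjoint hdisj
  have hle : F.card + (negSupp α).card ≤ k + 1 := by
    rw [← hcardW]; exact le_trans (Finset.card_le_card hsub) hcardG
  refine ⟨by omega, ?_⟩
  intro hFm
  have heq : F ∪ negSupp α = G := Finset.eq_of_subset_of_card_le hsub (by omega)
  have hntoNat : n ≤ (α i).toNat := by
    have := Int.toNat_le_toNat hni
    simpa using this
  have hiG : i ∈ G := by
    by_contra hiG
    have hle2 : (α i).toNat ≤ ∑ j ∈ Gᶜ, (α j).toNat :=
      Finset.single_le_sum (f := fun j => (α j).toNat) (fun _ _ => Nat.zero_le _) (Finset.mem_compl.mpr hiG)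
    omega
  rw [← heq] at hiG
  rcases Finset.mem_union.mp hiG with h | h
  · exact h
  · exfalso
    have : α i < 0 := (Finset.mem_filter.mp h).2
    omega

/-- Let `Δ` be a `k`-dimensional simplicial complex on `[s]` with
Stanley–Reisner ideal `I_Δ`. Suppose `α ∈ ℤ^s` satisfies `G_α ∈ Δ` and the reduced
simplicial homology `H̃_{k−|G_α|}(Δ_α(I_Δ^{(n)}); K) ≠ 0`. Then `α_i ≤ n − 1` for every
`i ∈ [s]`. -/
theorem entries_le_of_reducedHomology_nonzero
    (Δ : Set (Finset (Fin N))) (hΔ : DownClosed Δ) (k : ℕ)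
    (hdim : ∀ G ∈ Δ, G.card ≤ k + 1) (hex : ∃ G ∈ Δ, G.card = k + 1)
    (n : ℕ) (hn : 1 ≤ n) (α : Fin N → ℤ) (hG : negSupp α ∈ Δ)
    (hH : reducedHomologyNonzero K (degreeComplex K (symbolicPowerSR K Δ n) α)
      ((k : ℤ) - (negSupp α).card)) :
    ∀ i : Fin N, α i ≤ (n : ℤ) - 1 := by
  classical
  intro i
  by_contra hcon
  push_neg at hcon
  have hni : (n : ℤ) ≤ α i := by omega
  set Γ : Set (Finset (Fin N)) := degreeComplex K (symbolicPowerSR K Δ n) α with hΓdef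
  obtain ⟨m, hm, hnt⟩ := hH
  have hcard : (negSupp α).card ≤ k + 1 := hdim _ hG
  have hmk : m + (negSupp α).card = k + 1 := by
    have h1 : (m : ℤ) + ((negSupp α).card : ℤ) = (k : ℤ) + 1 := by omega
    exact_mod_cast h1
  have hker : Nontrivial ↥(LinearMap.ker (bdryFrom K Γ m)) := by
    by_contra hns
    rw [not_nontrivial_iff_subsingleton] at hns
    have hq : Subsingleton (homologyAtLevel K Γ m) :=
      (Submodule.Quotient.mk_surjective _).subsingleton
    exact (not_subsingleton_iff_nontrivial.mpr hnt) hq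
  obtain ⟨z, hz0⟩ := exists_ne (0 : ↥(LinearMap.ker (bdryFrom K Γ m)))
  have hzmem : bdryFrom K Γ m z.1 = 0 := z.2
  have hz1 : z.1 ≠ 0 := fun h => hz0 (Subtype.ext h)
  obtain ⟨F₀, hF₀⟩ := Finsupp.support_nonempty_iff.mpr hz1
  have hzF₀ : z.1 F₀ ≠ 0 := Finsupp.mem_support_iff.mp hF₀
  have hiF₀ : i ∈ F₀.1 :=
    (face_card_le_top_mem K Δ k hdim n α i hni m hmk F₀.1 F₀.2.1).2 F₀.2.2
  have hm1 : 1 ≤ m := by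
    have hp := Finset.card_pos.mpr ⟨i, hiF₀⟩
    have hc := F₀.2.2
    omega
  obtain ⟨m', rfl⟩ : ∃ m', m = m' + 1 := ⟨m - 1, by omega⟩
  have hz3 : bdry K Γ m' z.1 = 0 := hzmem
  have hEΓ : F₀.1.erase i ∈ Γ :=
    degreeComplex_downClosed K _ α F₀.1 F₀.2.1 _ (Finset.erase_subset _ _)
  have hEcard : (F₀.1.erase i).card = m' := by
    rw [Finset.card_erase_of_mem hiF₀, F₀.2.2]
    omega
  set e : {G : Finset (Fin N) // G ∈ Γ ∧ G.card = m'} := ⟨F₀.1.erase i, hEΓ, hEcard⟩ with hedef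
  have hkey : ∀ (F : {F : Finset (Fin N) // F ∈ Γ ∧ F.card = m' + 1}) (j : Fin N),
      j ∈ F.1 → F.1.erase j = F₀.1.erase i → F = F₀ ∧ j = i := by
    intro F j hj heq
    have hiF : i ∈ F.1 :=
      (face_card_le_top_mem K Δ k hdim n α i hni (m' + 1) hmk F.1 F.2.1).2 F.2.2
    have hji : j = i := by
      by_contra hji
      have hmem : i ∈ F.1.erase j := Finset.mem_erase.mpr ⟨fun h => hji h.symm, hiF⟩
      rw [heq] at hmem
      exact (Finset.notMem_erase i F₀.1) hmem
    subst hji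
    have hFF : F.1 = F₀.1 := by
      rw [← Finset.insert_erase hj, heq, Finset.insert_erase hiF₀]
    exact ⟨Subtype.ext hFF, rfl⟩
  have heval : (bdry K Γ m' z.1) e = 0 := by rw [hz3]; rfl
  rw [bdry, Finsupp.lsum_apply, Finsupp.sum_apply, Finsupp.sum] at heval
  rw [Finset.sum_eq_single_of_mem F₀ hF₀ ?houter] at heval
  case houter =>
    intro F hFs hFne
    rw [LinearMap.sum_apply, Finsupp.finset_sum_apply]
    apply Finset.sum_eq_zero
    intro j _
    rw [LinearMap.smul_apply, Finsupp.smul_apply]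
    by_cases hj : F.1.erase j.1 ∈ Γ
    · rw [dif_pos hj, Finsupp.lsingle_apply, Finsupp.single_apply, if_neg, smul_zero]
      intro hh
      exact hFne (hkey F j.1 j.2 (congrArg Subtype.val hh)).1
    · rw [dif_neg hj]
      simp
  rw [LinearMap.sum_apply, Finsupp.finset_sum_apply] at heval
  rw [Finset.sum_eq_single_of_mem ⟨i, hiF₀⟩ (Finset.mem_attach _ _) ?hinner] at heval
  case hinner =>
    intro j _ hjne
    rw [LinearMap.smul_apply, Finsupp.smul_apply]
    by_cases hj : F₀.1.erase j.1 ∈ Γ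
    · rw [dif_pos hj, Finsupp.lsingle_apply, Finsupp.single_apply, if_neg, smul_zero]
      intro hh
      exact hjne (Subtype.ext (hkey F₀ j.1 j.2 (congrArg Subtype.val hh)).2)
    · rw [dif_neg hj]
      simp
  rw [LinearMap.smul_apply, Finsupp.smul_apply, dif_pos hEΓ,
    Finsupp.lsingle_apply, Finsupp.single_apply, if_pos rfl, smul_eq_mul] at heval
  rcases mul_eq_zero.mp heval with h | h
  · exact pow_ne_zero _ (neg_ne_zero.mpr (one_ne_zero : (1 : K) ≠ 0)) h
  · exact hzF₀ h
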